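/- Let P ∈ ℝ^{n×n} be real-diagonalizable, i.e. ℝⁿ has a basis w₁,…,w_n of eigenvectors of P. Let γ ∈ (0,1) with I − γP invertible, and suppose r ∈ ℝⁿ lies in the span of m of these eigenvectors with m ≤ k ≤ n. Then there exist Φ ∈ ℝ^{n×k} with ΦᵀΦ = I_k and B ∈ ℝ^{k×k} such that: PΦ = ΦB; ΦΦᵀr = r; I − γΦᵀPΦ is invertible; Φ is a stationary point of the two-timescale latent self-prediction flow, i.e. (I − Φ(ΦᵀΦ)⁻¹Φᵀ) P Φ ((ΦᵀΦ)⁻¹ΦᵀPΦ)ᵀ = 0; and, with V̂ = (I − γΦᵀPΦ)⁻¹Φᵀr, the TD residual vanishes, ΦV̂ − r − γPΦV̂ = 0, and ΦV̂ = (I − γP)⁻¹r. Hence Φ is simultaneously a critical point of the TD loss and of the latent self-prediction loss, with zero value function approximation error. -/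

import Mathlib

open Matrix

/-- **Existence of a joint critical point of TD and latent self-prediction with zero value
error.** Suppose `P` is real-diagonalizable with eigenvector basis `w₁,…,w_n` (eigenvalues
`λᵢ`), `γ ∈ (0,1)` with `I − γP` invertible, and `r` lies in the span of `m` of these
eigenvectors with `m ≤ k ≤ n`. Then there exist `Φ ∈ ℝ^{n×k}` with orthonormal columns and
`B ∈ ℝ^{k×k}` such that `PΦ = ΦB`, `ΦΦᵀr = r`, `I − γΦᵀPΦ` is invertible, `Φ` is a
stationary point of the two-timescale latent self-prediction flow, and with
`V̂ = (I − γΦᵀPΦ)⁻¹Φᵀr` the TD residual vanishes and `ΦV̂ = (I − γP)⁻¹r`. -/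
theorem stmt11 {n : ℕ} (m k : ℕ) (hmk : m ≤ k) (hkn : k ≤ n)
    (P : Matrix (Fin n) (Fin n) ℝ)
    (w : Fin n → Fin n → ℝ) (lam : Fin n → ℝ)
    (heig : ∀ i, P *ᵥ w i = lam i • w i)
    (hindep : LinearIndependent ℝ w)
    (hspan : Submodule.span ℝ (Set.range w) = ⊤)
    (γ : ℝ) (hγ : γ ∈ Set.Ioo (0 : ℝ) 1)
    (hinvP : IsUnit (1 - γ • P))
    (r : Fin n → ℝ) (s : Finset (Fin n)) (hs : s.card = m)
    (hr : r ∈ Submodule.span ℝ (w '' ↑s)) :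
    ∃ (Φ : Matrix (Fin n) (Fin k) ℝ) (B : Matrix (Fin k) (Fin k) ℝ),
      Φᵀ * Φ = 1 ∧
      P * Φ = Φ * B ∧
      (Φ * Φᵀ) *ᵥ r = r ∧
      IsUnit ((1 : Matrix (Fin k) (Fin k) ℝ) - γ • (Φᵀ * P * Φ)) ∧
      (1 - Φ * (Φᵀ * Φ)⁻¹ * Φᵀ) * P * Φ * ((Φᵀ * Φ)⁻¹ * Φᵀ * P * Φ)ᵀ = 0 ∧
      Φ *ᵥ ((1 - γ • (Φᵀ * P * Φ))⁻¹ *ᵥ (Φᵀ *ᵥ r)) - r -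
          γ • (P *ᵥ (Φ *ᵥ ((1 - γ • (Φᵀ * P * Φ))⁻¹ *ᵥ (Φᵀ *ᵥ r)))) = 0 ∧
      Φ *ᵥ ((1 - γ • (Φᵀ * P * Φ))⁻¹ *ᵥ (Φᵀ *ᵥ r)) = (1 - γ • P)⁻¹ *ᵥ r := by
  classical
  -- enlarge `s` to a set `t` of cardinality `k`
  obtain ⟨t, hst, htk⟩ : ∃ t : Finset (Fin n), s ⊆ t ∧ t.card = k := by
    obtain ⟨t, h1, _, h2⟩ := Finset.exists_subsuperset_card_eq (n := k) (Finset.subset_univ s)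
      (by omega) (by simpa using hkn)
    exact ⟨t, h1, h2⟩
  -- enumerate `t`
  let e : Fin k → Fin n := fun j => (t.orderIsoOfFin htk j : Fin n)
  have he : Function.Injective e :=
    fun a b hab => (t.orderIsoOfFin htk).injective (Subtype.ext hab)
  have het : ∀ j, e j ∈ t := fun j => (t.orderIsoOfFin htk j).2
  let v : Fin k → EuclideanSpace ℝ (Fin n) := fun j => WithLp.toLp 2 (w (e j))
  have hvind : LinearIndependent ℝ v := by
    have h : LinearIndependent ℝ (fun i => WithLp.toLp 2 (w i)) :=
      hindep.map' (WithLp.linearEquiv 2 ℝ (Fin n → ℝ)).symm.toLinearMap (LinearEquiv.ker _)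
    exact h.comp e he
  -- Gram–Schmidt
  haveI hwf : WellFoundedLT (Fin k) := inferInstance
  let u : Fin k → EuclideanSpace ℝ (Fin n) :=
    InnerProductSpace.gramSchmidtNormed ℝ v
  have horth : Orthonormal ℝ u := InnerProductSpace.gramSchmidtNormed_orthonormal hvind
  have hWv : Submodule.span ℝ (Set.range u) = Submodule.span ℝ (Set.range v) := by
    rw [show Set.range u = Set.range (InnerProductSpace.gramSchmidtNormed ℝ v) from rfl,
      InnerProductSpace.span_gramSchmidtNormed_range, InnerProductSpace.span_gramSchmidt]
  set W : Submodule ℝ (EuclideanSpace ℝ (Fin n)) := Submodule.span ℝ (Set.range u) with hW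
  have hinner : ∀ a b, (∑ i, u a i * u b i) = if a = b then (1 : ℝ) else 0 := by
    intro a b
    have h := orthonormal_iff_ite.mp horth a b
    simpa [PiLp.inner_apply, RCLike.inner_apply, conj_trivial, mul_comm] using h
  let Φ : Matrix (Fin n) (Fin k) ℝ := Matrix.of fun i j => u j i
  have hΦ1 : Φᵀ * Φ = 1 := by
    ext a b
    simpa [Matrix.mul_apply, Matrix.transpose_apply, Matrix.one_apply, Φ] using hinner a b
  -- projection property
  have hbase : ∀ c, (Φ * Φᵀ) *ᵥ (u c : Fin n → ℝ) = u c := by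
    intro c
    funext i
    show ∑ j, (∑ a, u a i * u a j) * u c j = u c i
    calc ∑ j, (∑ a, u a i * u a j) * u c j
        = ∑ j, ∑ a, u a i * (u a j * u c j) := by
          refine Finset.sum_congr rfl fun j _ => ?_
          rw [Finset.sum_mul]
          exact Finset.sum_congr rfl fun a _ => by ring
      _ = ∑ a, u a i * ∑ j, u a j * u c j := by
          rw [Finset.sum_comm]
          exact Finset.sum_congr rfl fun a _ => (Finset.mul_sum _ _ _).symm
      _ = ∑ a, u a i * if a = c then (1:ℝ) else 0 := by
          exact Finset.sum_congr rfl fun a _ => by rw [hinner]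
      _ = u c i := by simp
  have hproj : ∀ x : Fin n → ℝ, WithLp.toLp 2 x ∈ W → (Φ * Φᵀ) *ᵥ x = x := by
    intro x hx
    change (Φ * Φᵀ) *ᵥ (WithLp.toLp 2 x).ofLp = (WithLp.toLp 2 x).ofLp
    generalize WithLp.toLp 2 x = y at hx ⊢
    induction hx using Submodule.span_induction with
    | mem y hy => obtain ⟨c, rfl⟩ := hy; exact hbase c
    | zero => simp
    | add y z _ _ hy hz =>
        show (Φ * Φᵀ) *ᵥ ((y : Fin n → ℝ) + z) = (y : Fin n → ℝ) + z
        rw [Matrix.mulVec_add, hy, hz]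
    | smul a y _ hy =>
        show (Φ * Φᵀ) *ᵥ (a • (y : Fin n → ℝ)) = a • (y : Fin n → ℝ)
        rw [Matrix.mulVec_smul, hy]
  -- invariance of W under P
  have hPW : ∀ x : Fin n → ℝ, WithLp.toLp 2 x ∈ W → WithLp.toLp 2 (P *ᵥ x) ∈ W := by
    rw [hWv]
    intro x hx
    change WithLp.toLp 2 (P *ᵥ (WithLp.toLp 2 x).ofLp) ∈ _
    generalize WithLp.toLp 2 x = y at hx ⊢
    induction hx using Submodule.span_induction with
    | mem y hy =>
        obtain ⟨j, rfl⟩ := hy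
        show WithLp.toLp 2 (P *ᵥ w (e j)) ∈ _
        rw [heig]
        exact (Submodule.smul_mem _ (lam (e j)) (Submodule.subset_span ⟨j, rfl⟩) : lam (e j) • v j ∈ Submodule.span ℝ (Set.range v))
    | zero => simp
    | add y z _ _ hy hz =>
        have : WithLp.toLp 2 (P *ᵥ (y + z).ofLp)
            = WithLp.toLp 2 (P *ᵥ y.ofLp) + WithLp.toLp 2 (P *ᵥ z.ofLp) := by
          simp [Matrix.mulVec_add]
        rw [this]; exact Submodule.add_mem _ hy hz
    | smul a y _ hy =>
        have : WithLp.toLp 2 (P *ᵥ (a • y).ofLp)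
            = a • WithLp.toLp 2 (P *ᵥ y.ofLp) := by simp [Matrix.mulVec_smul]
        rw [this]; exact Submodule.smul_mem _ _ hy
  have huW : ∀ j, (u j : EuclideanSpace ℝ (Fin n)) ∈ W := fun j => Submodule.subset_span ⟨j, rfl⟩
  have hMul : ∀ (M : Matrix (Fin n) (Fin n) ℝ) (i : Fin n) (j : Fin k),
      (M * Φ) i j = (M *ᵥ (u j : Fin n → ℝ)) i := fun M i j => rfl
  have hPB : P * Φ = Φ * (Φᵀ * P * Φ) := by
    ext i j
    have e1 : Φ * (Φᵀ * P * Φ) = (Φ * Φᵀ * P) * Φ := by simp only [Matrix.mul_assoc]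
    rw [hMul P i j, e1, hMul (Φ * Φᵀ * P) i j, ← Matrix.mulVec_mulVec,
      hproj _ (hPW (u j).ofLp (huW j))]
  set B : Matrix (Fin k) (Fin k) ℝ := Φᵀ * P * Φ with hB
  -- r ∈ W
  have hrW : WithLp.toLp 2 r ∈ W := by
    rw [hWv]
    have hr' : WithLp.toLp 2 r ∈ Submodule.span ℝ ((fun i => WithLp.toLp 2 (w i)) '' ↑s) := by
      have := Submodule.mem_map_of_mem (f := (WithLp.linearEquiv 2 ℝ (Fin n → ℝ)).symm.toLinearMap) hr
      rw [Submodule.map_span, ← Set.image_comp] at this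
      exact this
    refine Submodule.span_mono ?_ hr'
    rintro x ⟨i, hi, rfl⟩
    refine ⟨(t.orderIsoOfFin htk).symm ⟨i, hst hi⟩, ?_⟩
    show WithLp.toLp 2 (w (e _)) = _
    simp only [e, OrderIso.apply_symm_apply]
  have hΦΦr : (Φ * Φᵀ) *ᵥ r = r := hproj r hrW
  -- key matrix identity
  have hkey : Φ * (1 - γ • B) = (1 - γ • P) * Φ := by
    rw [Matrix.mul_sub, Matrix.sub_mul, Matrix.mul_one, Matrix.one_mul,
      Matrix.mul_smul, Matrix.smul_mul, ← hPB]
  -- invertibility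
  have hinvB : IsUnit ((1 : Matrix (Fin k) (Fin k) ℝ) - γ • B) := by
    rw [← Matrix.mulVec_injective_iff_isUnit]
    intro x y hxy
    have h1 : (1 - γ • P) *ᵥ (Φ *ᵥ x) = (1 - γ • P) *ᵥ (Φ *ᵥ y) := by
      rw [Matrix.mulVec_mulVec, Matrix.mulVec_mulVec, ← hkey,
        ← Matrix.mulVec_mulVec, ← Matrix.mulVec_mulVec, hxy]
    have h2 : Φ *ᵥ x = Φ *ᵥ y := Matrix.mulVec_injective_iff_isUnit.mpr hinvP h1
    have h3 : (Φᵀ * Φ) *ᵥ x = (Φᵀ * Φ) *ᵥ y := by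
      rw [← Matrix.mulVec_mulVec, ← Matrix.mulVec_mulVec, h2]
    simpa [hΦ1] using h3
  refine ⟨Φ, B, hΦ1, hPB, hΦΦr, hinvB, ?_, ?_, ?_⟩
  · -- stationarity
    have h0 : (1 - Φ * (Φᵀ * Φ)⁻¹ * Φᵀ) * P * Φ = 0 := by
      rw [hΦ1, inv_one, Matrix.mul_one, Matrix.sub_mul, Matrix.sub_mul, Matrix.one_mul]
      have e2 : Φ * Φᵀ * P * Φ = Φ * (Φᵀ * P * Φ) := by simp only [Matrix.mul_assoc]
      rw [e2, ← hPB, sub_self]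
    rw [h0, Matrix.zero_mul]
  · -- TD residual
    set V : Fin k → ℝ := (1 - γ • B)⁻¹ *ᵥ (Φᵀ *ᵥ r) with hV
    have hMV : (1 - γ • B) *ᵥ V = Φᵀ *ᵥ r := by
      rw [hV, Matrix.mulVec_mulVec, Matrix.mul_nonsing_inv _
        ((Matrix.isUnit_iff_isUnit_det _).mp hinvB), Matrix.one_mulVec]
    have hcore : (1 - γ • P) *ᵥ (Φ *ᵥ V) = r := by
      rw [Matrix.mulVec_mulVec, ← hkey, ← Matrix.mulVec_mulVec, hMV,
        Matrix.mulVec_mulVec, hΦΦr]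
    have expand : Φ *ᵥ V - r - γ • (P *ᵥ (Φ *ᵥ V)) = (1 - γ • P) *ᵥ (Φ *ᵥ V) - r := by
      rw [Matrix.sub_mulVec, Matrix.one_mulVec, Matrix.smul_mulVec]
      abel
    show Φ *ᵥ V - r - γ • (P *ᵥ (Φ *ᵥ V)) = 0
    rw [expand, hcore, sub_self]
  · -- value equality
    set V : Fin k → ℝ := (1 - γ • B)⁻¹ *ᵥ (Φᵀ *ᵥ r) with hV
    have hMV : (1 - γ • B) *ᵥ V = Φᵀ *ᵥ r := by
      rw [hV, Matrix.mulVec_mulVec, Matrix.mul_nonsing_inv _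
        ((Matrix.isUnit_iff_isUnit_det _).mp hinvB), Matrix.one_mulVec]
    have hcore : (1 - γ • P) *ᵥ (Φ *ᵥ V) = r := by
      rw [Matrix.mulVec_mulVec, ← hkey, ← Matrix.mulVec_mulVec, hMV,
        Matrix.mulVec_mulVec, hΦΦr]
    have hinvs : (1 - γ • P)⁻¹ *ᵥ ((1 - γ • P) *ᵥ (Φ *ᵥ V)) = Φ *ᵥ V := by
      rw [Matrix.mulVec_mulVec, Matrix.nonsing_inv_mul _
        ((Matrix.isUnit_iff_isUnit_det _).mp hinvP), Matrix.one_mulVec]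
    show Φ *ᵥ V = (1 - γ • P)⁻¹ *ᵥ r
    conv_lhs => rw [← hinvs]
    rw [hcore]
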